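/- Let A : ℝ → M_n(ℝ) be a map into the n×n real matrices, let X : ℝ → M_n(ℝ) be differentiable with X'(t) = A(t)·X(t) and X(t) invertible for every t, and let x : ℝ → ℝⁿ be differentiable with x'(t) = A(t)·x(t) for every t. Then the function t ↦ X(t)⁻¹·x(t) is constant on ℝ. (This is the superposition function Ψ(x₀, x₁,…,x_n) = X⁻¹ x₀ for the homogeneous linear system, where X is the matrix whose columns are n solutions.) -/

import Mathlib

open Matrix

private lemma det_diffAt {n : ℕ} {M : ℝ → Matrix (Fin n) (Fin n) ℝ} {t : ℝ}
    (h : ∀ i j, DifferentiableAt ℝ (fun s => M s i j) t) :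
    DifferentiableAt ℝ (fun s => (M s).det) t := by
  simp only [Matrix.det_apply']
  exact DifferentiableAt.fun_sum fun σ _ =>
    (differentiableAt_const _).mul (DifferentiableAt.fun_finsetProd fun i _ => h _ _)

/-- For a fundamental matrix `X` of the homogeneous linear system
`x' = A(t)x` (i.e. `X' = A(t)X` with `X(t)` invertible for all `t`) and any
solution `x` of the system, the superposition function
`t ↦ X(t)⁻¹ · x(t)` is constant on `ℝ`. -/
theorem stmt_6 (n : ℕ)
    (A : ℝ → Matrix (Fin n) (Fin n) ℝ)
    (X : ℝ → Matrix (Fin n) (Fin n) ℝ)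
    (hX : ∀ (t : ℝ) (i j : Fin n),
      HasDerivAt (fun s => X s i j) ((A t * X t) i j) t)
    (hXinv : ∀ t : ℝ, IsUnit (X t))
    (x : ℝ → Fin n → ℝ)
    (hx : ∀ (t : ℝ) (i : Fin n),
      HasDerivAt (fun s => x s i) ((A t).mulVec (x t) i) t) :
    ∀ t : ℝ, (X t)⁻¹.mulVec (x t) = (X 0)⁻¹.mulVec (x 0) := by
  have hdetu : ∀ s, IsUnit (X s).det := fun s =>
    (Matrix.isUnit_iff_isUnit_det (X s)).mp (hXinv s)
  have hdet_ne : ∀ s, (X s).det ≠ 0 := fun s => (hdetu s).ne_zero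
  have hXd : ∀ s (i j : Fin n), DifferentiableAt ℝ (fun u => X u i j) s :=
    fun s i j => (hX s i j).differentiableAt
  -- entries of the adjugate are differentiable
  have hadj : ∀ s (i j : Fin n),
      DifferentiableAt ℝ (fun u => (X u).adjugate i j) s := by
    intro s i j
    simp only [Matrix.adjugate_apply]
    refine det_diffAt fun k l => ?_
    rcases eq_or_ne k j with rfl | hk
    · simp only [Matrix.updateRow_self]
      exact differentiableAt_const _
    · simp only [Matrix.updateRow_ne hk]
      exact hXd s k l
  -- entries of the inverse are differentiable
  have hYentry : ∀ s (i j : Fin n),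
      (X s)⁻¹ i j = (X s).det⁻¹ * (X s).adjugate i j := by
    intro s i j
    rw [Matrix.inv_def, Ring.inverse_eq_inv']
    simp [Matrix.smul_apply, smul_eq_mul]
  have hY : ∀ s (i j : Fin n), DifferentiableAt ℝ (fun u => (X u)⁻¹ i j) s := by
    intro s i j
    simp only [hYentry]
    exact ((det_diffAt (hXd s)).inv (hdet_ne s)).mul (hadj s i j)
  -- the derivative matrix of the inverse
  set B : ℝ → Matrix (Fin n) (Fin n) ℝ :=
    fun s => Matrix.of fun i j => deriv (fun u => (X u)⁻¹ i j) s with hBdef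
  have hB : ∀ s (i j : Fin n),
      HasDerivAt (fun u => (X u)⁻¹ i j) (B s i j) s := fun s i j =>
    (hY s i j).hasDerivAt
  -- B t = -((X t)⁻¹ * A t)
  have hBval : ∀ t, B t = -((X t)⁻¹ * A t) := by
    intro t
    have hrel : B t * X t + (X t)⁻¹ * (A t * X t) = 0 := by
      ext i j
      have h1 : HasDerivAt (fun s => ∑ k, (X s)⁻¹ i k * X s k j)
          (∑ k, (B t i k * X t k j + (X t)⁻¹ i k * (A t * X t) k j)) t :=
        HasDerivAt.fun_sum fun k _ => (hB t i k).mul (hX t k j)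
      have h2 : (fun s => ∑ k, (X s)⁻¹ i k * X s k j) =
          fun _ => (1 : Matrix (Fin n) (Fin n) ℝ) i j := by
        funext s
        rw [← Matrix.nonsing_inv_mul (X s) (hdetu s)]
        simp [Matrix.mul_apply]
      rw [h2] at h1
      have h0 : (∑ k, (B t i k * X t k j + (X t)⁻¹ i k * (A t * X t) k j)) = 0 :=
        h1.unique (hasDerivAt_const _ _)
      simpa [Matrix.add_apply, Matrix.mul_apply, Finset.sum_add_distrib] using h0
    have h3 : B t * X t = -((X t)⁻¹ * (A t * X t)) := by
      linear_combination (norm := noncomm_ring) hrel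
    calc B t = B t * X t * (X t)⁻¹ := by
          rw [Matrix.mul_assoc, Matrix.mul_nonsing_inv (X t) (hdetu t), Matrix.mul_one]
      _ = -((X t)⁻¹ * (A t * X t)) * (X t)⁻¹ := by rw [h3]
      _ = -((X t)⁻¹ * A t * (X t * (X t)⁻¹)) := by noncomm_ring
      _ = -((X t)⁻¹ * A t) := by
          rw [Matrix.mul_nonsing_inv (X t) (hdetu t), Matrix.mul_one]
  -- each component of the superposition function is constant
  intro t
  funext i
  have hf0 : ∀ s, HasDerivAt (fun u => (X u)⁻¹.mulVec (x u) i) 0 s := by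
    intro s
    have h : HasDerivAt (fun u => ∑ k, (X u)⁻¹ i k * x u k)
        (∑ k, (B s i k * x s k + (X s)⁻¹ i k * (A s).mulVec (x s) k)) s :=
      HasDerivAt.fun_sum fun k _ => (hB s i k).mul (hx s k)
    have e1 : (∑ k, B s i k * x s k) = (B s).mulVec (x s) i := rfl
    have e2 : (∑ k, (X s)⁻¹ i k * (A s).mulVec (x s) k)
        = ((X s)⁻¹ * A s).mulVec (x s) i := by
      rw [← Matrix.mulVec_mulVec]; rfl
    have hval : (∑ k, (B s i k * x s k + (X s)⁻¹ i k * (A s).mulVec (x s) k)) = 0 := by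
      rw [Finset.sum_add_distrib, e1, e2, hBval s, Matrix.neg_mulVec]
      simp
    rw [hval] at h
    have : (fun u => (X u)⁻¹.mulVec (x u) i) = fun u => ∑ k, (X u)⁻¹ i k * x u k := rfl
    rw [this]
    exact h
  exact is_const_of_deriv_eq_zero
    (fun s => (hf0 s).differentiableAt) (fun s => (hf0 s).deriv) t 0
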